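/- Let p ∈ ℝⁿ with p ≥ 0 solve p = s + Aᵀp + Σᵢ min{rᵢ + Bᵢᵀp, 0}·Eᵢ, and define the linear Q-function parameters qˣ = s + Aᵀp and qᵘ = r + Bᵀp. Then for every x ∈ ℝⁿ with x ≥ 0 and every u ∈ ℝ^m such that x⁺ := Ax + Bu ≥ 0, the Bellman equation in Q-factor form holds: (qˣ)ᵀx + (qᵘ)ᵀu = sᵀx + rᵀu + min_{K ∈ 𝒦(E)} ((qˣ)ᵀ + (qᵘ)ᵀK)·x⁺, and the minimum on the right equals pᵀx⁺. -/

import Mathlib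

open Matrix Finset

/-- `min{v, 0}`: the minimum of 0 and of all entries of the vector `v`. -/
noncomputable def minZero {α : Type*} [Fintype α] (v : α → ℝ) : ℝ :=
  Finset.univ.fold min 0 v

/-- `‖v‖∞` for a vector: the maximum absolute entry. -/
noncomputable def vecSupNorm {α : Type*} [Fintype α] (v : α → ℝ) : ℝ :=
  Finset.univ.fold max 0 (fun a => |v a|)

/-- `‖M‖∞` for a matrix: the maximum absolute row sum. -/
noncomputable def matInfNorm {α β : Type*} [Fintype α] [Fintype β] (M : Matrix α β ℝ) : ℝ :=
  Finset.univ.fold max 0 (fun a => ∑ b, |M a b|)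

/-- `‖M‖₁` for a matrix: the maximum absolute column sum. -/
noncomputable def matOneNorm {α β : Type*} [Fintype α] [Fintype β] (M : Matrix α β ℝ) : ℝ :=
  matInfNorm Mᵀ

/-- The feasible gain set 𝒦(E): K ≥ 0 entrywise and, for each block i,
either 𝟏ᵀKᵢ = Eᵢᵀ or 𝟏ᵀKᵢ = 0. -/
def feasibleGain {n : ℕ} (m : Fin n → ℕ) (E : Matrix (Fin n) (Fin n) ℝ) :
    Set (Matrix ((i : Fin n) × Fin (m i)) (Fin n) ℝ) :=
  {K | (∀ a j, 0 ≤ K a j) ∧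
    ∀ i : Fin n, (∀ j, ∑ k : Fin (m i), K ⟨i, k⟩ j = E i j) ∨ (∀ k j, K ⟨i, k⟩ j = 0)}

/-- The extended constraint matrix Ē: for each i, mᵢ stacked copies of the row Eᵢᵀ. -/
def extE {n : ℕ} (m : Fin n → ℕ) (E : Matrix (Fin n) (Fin n) ℝ) :
    Matrix ((i : Fin n) × Fin (m i)) (Fin n) ℝ :=
  fun a j => E a.1 j

/-- `K` is a greedy gain for `v`: `K ∈ 𝒦(E)` and `Kᵢᵀ vᵢ = min{vᵢ,0}·Eᵢ` for each block i. -/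
def IsGreedy {n : ℕ} (m : Fin n → ℕ) (E : Matrix (Fin n) (Fin n) ℝ)
    (v : ((i : Fin n) × Fin (m i)) → ℝ)
    (K : Matrix ((i : Fin n) × Fin (m i)) (Fin n) ℝ) : Prop :=
  K ∈ feasibleGain m E ∧
    ∀ i j, (∑ k : Fin (m i), K ⟨i, k⟩ j * v ⟨i, k⟩)
      = minZero (fun k : Fin (m i) => v ⟨i, k⟩) * E i j

/-- The Bellman operator `p ↦ s + Aᵀp + Σᵢ min{rᵢ + Bᵢᵀp, 0}·Eᵢ`. -/
noncomputable def bellman {n : ℕ} (m : Fin n → ℕ) (A : Matrix (Fin n) (Fin n) ℝ)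
    (B : Matrix (Fin n) ((i : Fin n) × Fin (m i)) ℝ)
    (s : Fin n → ℝ) (r : ((i : Fin n) × Fin (m i)) → ℝ)
    (E : Matrix (Fin n) (Fin n) ℝ) (p : Fin n → ℝ) : Fin n → ℝ :=
  fun j => s j + Aᵀ.mulVec p j +
    ∑ i : Fin n, minZero (fun k : Fin (m i) => r ⟨i, k⟩ + Bᵀ.mulVec p ⟨i, k⟩) * E i j


lemma minZero_nonpos {α : Type*} [Fintype α] (v : α → ℝ) : minZero v ≤ 0 :=
  (Finset.fold_min_le _).2 (Or.inl le_rfl)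

lemma minZero_le {α : Type*} [Fintype α] (v : α → ℝ) (k : α) : minZero v ≤ v k :=
  (Finset.fold_min_le _).2 (Or.inr ⟨k, Finset.mem_univ k, le_rfl⟩)

lemma minZero_cases {α : Type*} [Fintype α] (v : α → ℝ) :
    minZero v = 0 ∨ ∃ k, minZero v = v k ∧ v k ≤ 0 := by
  rcases (Finset.fold_min_le _).1 (le_refl (minZero v)) with h | ⟨k, _, hk⟩
  · exact Or.inl (le_antisymm (minZero_nonpos v) h)
  · exact Or.inr ⟨k, le_antisymm (minZero_le v k) hk, hk.trans (minZero_nonpos v)⟩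

/-- the Bellman equation in Q-factor form, with `qˣ = s + Aᵀp` and
`qᵘ = r + Bᵀp`: the minimum over `K ∈ 𝒦(E)` of `((qˣ)ᵀ + (qᵘ)ᵀK)·x⁺` equals `pᵀx⁺`,
and `(qˣ)ᵀx + (qᵘ)ᵀu = sᵀx + rᵀu + pᵀx⁺`. -/
theorem stmt_11 {n : ℕ} {m : Fin n → ℕ} (hn : 0 < n) (hm : ∀ i, 0 < m i)
    (A : Matrix (Fin n) (Fin n) ℝ) (B : Matrix (Fin n) ((i : Fin n) × Fin (m i)) ℝ)
    (s : Fin n → ℝ) (hs : ∀ j, 0 ≤ s j)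
    (r : ((i : Fin n) × Fin (m i)) → ℝ) (hr : ∀ a, 0 ≤ r a)
    (E : Matrix (Fin n) (Fin n) ℝ) (hE : ∀ i j, 0 ≤ E i j)
    (p : Fin n → ℝ) (hp0 : ∀ j, 0 ≤ p j)
    (hpeq : p = bellman m A B s r E p)
    (x : Fin n → ℝ) (hx : ∀ j, 0 ≤ x j)
    (u : ((i : Fin n) × Fin (m i)) → ℝ)
    (hxplus : ∀ j, 0 ≤ (A.mulVec x + B.mulVec u) j) :
    IsLeast {c : ℝ | ∃ K ∈ feasibleGain m E,
        c = ((s + Aᵀ.mulVec p) + Kᵀ.mulVec (r + Bᵀ.mulVec p)) ⬝ᵥ (A.mulVec x + B.mulVec u)}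
      (p ⬝ᵥ (A.mulVec x + B.mulVec u)) ∧
    (s + Aᵀ.mulVec p) ⬝ᵥ x + (r + Bᵀ.mulVec p) ⬝ᵥ u
      = s ⬝ᵥ x + r ⬝ᵥ u + p ⬝ᵥ (A.mulVec x + B.mulVec u) := by
  classical
  set q : ((i : Fin n) × Fin (m i)) → ℝ := r + Bᵀ.mulVec p with hq
  set xp : Fin n → ℝ := A.mulVec x + B.mulVec u with hxp
  -- rewrite Kᵀ.mulVec q as a double sum
  have hKmul : ∀ (K : Matrix ((i : Fin n) × Fin (m i)) (Fin n) ℝ) (j : Fin n),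
      Kᵀ.mulVec q j = ∑ i : Fin n, ∑ k : Fin (m i), K ⟨i, k⟩ j * q ⟨i, k⟩ := by
    intro K j
    have h1 : Kᵀ.mulVec q j = ∑ a : (i : Fin n) × Fin (m i), K a j * q a := by
      simp [Matrix.mulVec, dotProduct, Matrix.transpose_apply]
    rw [h1, ← Finset.univ_sigma_univ, Finset.sum_sigma]
  have hpj : ∀ j, p j = (s + Aᵀ.mulVec p) j +
      ∑ i : Fin n, minZero (fun k : Fin (m i) => q ⟨i, k⟩) * E i j := by
    intro j
    conv_lhs => rw [hpeq]
    simp [bellman, hq]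
  constructor
  · constructor
    · -- membership: construct the greedy gain
      refine ⟨fun a j =>
        if h : ∃ k : Fin (m a.1), minZero (fun k' : Fin (m a.1) => q ⟨a.1, k'⟩) = q ⟨a.1, k⟩
            ∧ q ⟨a.1, k⟩ ≤ 0
        then (if a.2 = h.choose then E a.1 j else 0) else 0, ⟨?_, ?_⟩, ?_⟩
      · intro a j; dsimp only; split_ifs <;> simp [hE]
      · intro i
        by_cases h : ∃ k : Fin (m i), minZero (fun k' : Fin (m i) => q ⟨i, k'⟩) = q ⟨i, k⟩
            ∧ q ⟨i, k⟩ ≤ 0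
        · left; intro j
          simp only [dif_pos h]
          rw [Finset.sum_ite_eq' Finset.univ h.choose (fun _ => E i j)]
          simp
        · right; intro k j; simp [h]
      · -- value equals p ⬝ xp
        have hval : ∀ j : Fin n, ((s + Aᵀ.mulVec p) + (fun a j =>
            if h : ∃ k : Fin (m a.1), minZero (fun k' : Fin (m a.1) => q ⟨a.1, k'⟩) = q ⟨a.1, k⟩
                ∧ q ⟨a.1, k⟩ ≤ 0
            then (if a.2 = h.choose then E a.1 j else 0) else 0 :
            Matrix ((i : Fin n) × Fin (m i)) (Fin n) ℝ)ᵀ.mulVec q) j = p j := by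
          intro j
          rw [Pi.add_apply]; erw [hKmul]; rw [hpj j]
          congr 1
          apply Finset.sum_congr rfl
          intro i _
          by_cases h : ∃ k : Fin (m i), minZero (fun k' : Fin (m i) => q ⟨i, k'⟩) = q ⟨i, k⟩
              ∧ q ⟨i, k⟩ ≤ 0
          · simp only [dif_pos h, ite_mul, zero_mul]
            rw [Finset.sum_ite_eq' Finset.univ h.choose (fun k => E i j * q ⟨i, k⟩),
              if_pos (Finset.mem_univ _), ← h.choose_spec.1, mul_comm]
          · have h0 : minZero (fun k' : Fin (m i) => q ⟨i, k'⟩) = 0 := by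
              rcases minZero_cases (fun k' : Fin (m i) => q ⟨i, k'⟩) with h0 | ⟨k, hk1, hk2⟩
              · exact h0
              · exact absurd ⟨k, hk1, hk2⟩ h
            rw [Finset.sum_congr rfl fun k _ => by rw [dif_neg h, zero_mul]]
            simp [h0]
        rw [show ((s + Aᵀ.mulVec p) + _ᵀ.mulVec q) = p from funext hval]
    · -- lower bound
      rintro c ⟨K, ⟨hK0, hKblk⟩, rfl⟩
      apply Finset.sum_le_sum
      intro j _
      apply mul_le_mul_of_nonneg_right _ (hxplus j)
      rw [hpj j]
      simp only [Pi.add_apply]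
      rw [hKmul]
      refine add_le_add_right (Finset.sum_le_sum fun i _ => ?_) _
      rcases hKblk i with hb | hb
      · calc minZero (fun k : Fin (m i) => q ⟨i, k⟩) * E i j
            = ∑ k : Fin (m i), K ⟨i, k⟩ j * minZero (fun k : Fin (m i) => q ⟨i, k⟩) := by
              rw [← Finset.sum_mul, hb j, mul_comm]
          _ ≤ ∑ k : Fin (m i), K ⟨i, k⟩ j * q ⟨i, k⟩ :=
              Finset.sum_le_sum fun k _ =>
                mul_le_mul_of_nonneg_left (minZero_le _ k) (hK0 ⟨i, k⟩ j)
      · rw [show (∑ k : Fin (m i), K ⟨i, k⟩ j * q ⟨i, k⟩) = 0 by simp [hb]]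
        exact mul_nonpos_of_nonpos_of_nonneg (minZero_nonpos _) (hE i j)
  · -- the algebraic identity
    rw [hq, hxp, add_dotProduct, add_dotProduct, dotProduct_add,
      Matrix.mulVec_transpose, Matrix.mulVec_transpose,
      Matrix.dotProduct_mulVec, Matrix.dotProduct_mulVec]
    ring
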